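/- Let b > 0, x > 0 and y ∈ ℝ. Set R⁺ = √(x² + (y + b)²), R⁻ = √(x² + (y − b)²), N = x² + y² − b², and u = log((y + b + R⁺)/(y − b + R⁻)). Then (N − R⁺·R⁻)²/(2b²x⁴) = (2/b²)·sinh⁴(u/2). (Note that y − b + R⁻ > 0 and y + b + R⁺ > 0 since x > 0, so u is well defined.) -/

import Mathlib

/-- **The 'finite rod' example (Zsigrai cloud): the boundaries are isodensity
surfaces.**  For `b > 0`, `x > 0`, `y ∈ ℝ`, with `R⁺ = √(x² + (y + b)²)`,
`R⁻ = √(x² + (y − b)²)`, `N = x² + y² − b²` and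
`u = log((y + b + R⁺)/(y − b + R⁻))`, one has
`(N − R⁺R⁻)²/(2b²x⁴) = (2/b²)·sinh⁴(u/2)`. -/
theorem finite_rod_isodensity (b x y : ℝ) (hb : 0 < b) (hx : 0 < x)
    (Rp Rm N u : ℝ)
    (hRp : Rp = Real.sqrt (x ^ 2 + (y + b) ^ 2))
    (hRm : Rm = Real.sqrt (x ^ 2 + (y - b) ^ 2))
    (hN : N = x ^ 2 + y ^ 2 - b ^ 2)
    (hu : u = Real.log ((y + b + Rp) / (y - b + Rm))) :
    (N - Rp * Rm) ^ 2 / (2 * b ^ 2 * x ^ 4) = (2 / b ^ 2) * Real.sinh (u / 2) ^ 4 := by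
  have hRp2 : Rp ^ 2 = x ^ 2 + (y + b) ^ 2 := by
    rw [hRp]; exact Real.sq_sqrt (by positivity)
  have hRm2 : Rm ^ 2 = x ^ 2 + (y - b) ^ 2 := by
    rw [hRm]; exact Real.sq_sqrt (by positivity)
  set A := y + b + Rp with hA
  set B := y - b + Rm with hB
  have hRpgt : |y + b| < Rp := by
    rw [hRp, ← Real.sqrt_sq_eq_abs]
    apply Real.sqrt_lt_sqrt (by positivity)
    nlinarith
  have hRmgt : |y - b| < Rm := by
    rw [hRm, ← Real.sqrt_sq_eq_abs]
    apply Real.sqrt_lt_sqrt (by positivity)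
    nlinarith
  have hApos : 0 < A := by
    have h1 := neg_abs_le (y + b); rw [hA]; linarith
  have hBpos : 0 < B := by
    have h1 := neg_abs_le (y - b); rw [hB]; linarith
  set t := Real.exp (u / 2) with ht
  have htpos : 0 < t := Real.exp_pos _
  have htne : t ≠ 0 := ne_of_gt htpos
  have ht2 : t ^ 2 = A / B := by
    rw [ht, ← Real.exp_nat_mul]
    have h2 : (2 : ℝ) * (u / 2) = u := by ring
    simp only [Nat.cast_ofNat, h2]
    rw [hu, Real.exp_log (by positivity)]
  have ht2' : t ^ 2 * B = A := by
    rw [ht2]; field_simp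
  have hsinh : Real.sinh (u / 2) = (t - 1 / t) / 2 := by
    rw [Real.sinh_eq, Real.exp_neg, one_div]
  -- key algebraic identity
  have key : 2 * A * B * (Rp * Rm - N) = x ^ 2 * (A - B) ^ 2 := by
    rw [hA, hB, hN]
    linear_combination (2 * (y - b) * Rm + 2 * Rm ^ 2 - x ^ 2) * hRp2 +
      (2 * (y + b) * Rp + 2 * (x ^ 2 + (y + b) ^ 2) - x ^ 2) * hRm2
  have key2 : (2 * A * B * (Rp * Rm - N)) ^ 2 = (x ^ 2 * (A - B) ^ 2) ^ 2 := by
    rw [key]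
  have hgoal : (N - Rp * Rm) ^ 2 * (4 * A ^ 2 * B ^ 2) = (A - B) ^ 4 * x ^ 4 := by
    linear_combination key2
  have h1 : t - 1 / t = (A - B) / (B * t) := by
    field_simp
    have ht2'' := ht2'
    rw [hA, hB] at ht2''
    linear_combination ht2''
  have h2 : (B * t) ^ 4 = A ^ 2 * B ^ 2 := by
    linear_combination (B ^ 2 * (t ^ 2 * B + A)) * ht2'
  rw [hsinh, h1]
  have hABne : A ^ 2 * B ^ 2 ≠ 0 := by positivity
  rw [div_div, div_pow, show (B * t * 2) ^ 4 = 16 * (A ^ 2 * B ^ 2) by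
    linear_combination 16 * h2]
  clear_value t A B
  field_simp
  linear_combination 4 * hgoal
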